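/- arXiv:1106.2965 — 4 statements merged into one kernel-verified Lean document; each statement's English description precedes it below -/
import Mathlib

section
/- Let (Ω, μ) be a measure space, let ψ : Ω → ℝ be a bounded measurable function, and let f₁, …, f_N : Ω → ℂ be measurable functions such that f_i · conj(f_j) is μ-integrable for all i, j. For t ∈ ℝ define the N×N matrix G(t) with entries G(t)_{ij} = ∫_Ω f_i · conj(f_j) · e^{−tψ} dμ, and assume G(0) is the identity matrix. Then t ↦ det(G(t)) is differentiable at t = 0 with derivative −∫_Ω (Σ_{i=1}^N |f_i|²) · ψ dμ. -/
open MeasureTheory ComplexConjugate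

lemma det_hasDerivAt_one {N : ℕ} (G : ℝ → Matrix (Fin N) (Fin N) ℂ)
    (D : Matrix (Fin N) (Fin N) ℂ)
    (h : ∀ i j, HasDerivAt (fun t => G t i j) (D i j) 0) (hG0 : G 0 = 1) :
    HasDerivAt (fun t => (G t).det) (∑ i, D i i) 0 := by
  have key : ∀ σ : Equiv.Perm (Fin N), HasDerivAt
      (fun t => ∏ i, G t (σ i) i)
      (∑ i, (∏ j ∈ Finset.univ.erase i, G 0 (σ j) j) • D (σ i) i) 0 :=
    fun σ => HasDerivAt.fun_finsetProd (fun i _ => h (σ i) i)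
  have hdet : HasDerivAt (fun t => (G t).det)
      (∑ σ : Equiv.Perm (Fin N), ((Equiv.Perm.sign σ : ℤ) : ℂ) *
        ∑ i, (∏ j ∈ Finset.univ.erase i, G 0 (σ j) j) • D (σ i) i) 0 := by
    have hrw : (fun t => (G t).det) = fun t =>
        ∑ σ : Equiv.Perm (Fin N), ((Equiv.Perm.sign σ : ℤ) : ℂ) * ∏ i, G t (σ i) i := by
      funext t
      simp [Matrix.det_apply, Units.smul_def, zsmul_eq_mul]
    rw [hrw]
    exact HasDerivAt.fun_sum fun σ _ => (key σ).const_mul _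
  convert hdet using 1
  rw [Finset.sum_eq_single (1 : Equiv.Perm (Fin N))]
  · simp [hG0, Matrix.one_apply]
  · intro σ _ hσ
    have : ∀ i : Fin N, (∏ j ∈ Finset.univ.erase i, G 0 (σ j) j) = 0 := by
      intro i
      obtain ⟨a, ha, hai⟩ : ∃ a ∈ σ.support, a ≠ i := by
        have h2 : 1 < σ.support.card := Equiv.Perm.one_lt_card_support_of_ne_one hσ
        by_contra hc
        push_neg at hc
        have : σ.support ⊆ {i} := fun a ha => Finset.mem_singleton.2 (hc a ha)
        have h3 := Finset.card_le_card this
        rw [Finset.card_singleton] at h3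
        omega
      refine Finset.prod_eq_zero (Finset.mem_erase.2 ⟨hai, Finset.mem_univ a⟩) ?_
      rw [hG0, Matrix.one_apply_ne (Equiv.Perm.mem_support.1 ha)]
    simp [this]
  · simp

/-- Let `(Ω, μ)` be a measure space, `ψ : Ω → ℝ` a bounded measurable function
and `f₁, …, f_N : Ω → ℂ` measurable functions with `f i · conj (f j)` integrable for all `i, j`.
For `t ∈ ℝ` let `G t` be the `N × N` matrix with entries
`(G t) i j = ∫ f i · conj (f j) · e^{−tψ} dμ`, and assume `G 0 = 1`.
Then `t ↦ det (G t)` is differentiable at `t = 0` with derivative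
`−∫ (Σ i, |f i|²) ψ dμ`. -/
theorem stmt2 {Ω : Type*} [MeasurableSpace Ω] (μ : Measure Ω) (N : ℕ)
    (ψ : Ω → ℝ) (hψm : Measurable ψ) (Cψ : ℝ) (hψb : ∀ x, |ψ x| ≤ Cψ)
    (f : Fin N → Ω → ℂ) (hfm : ∀ i, Measurable (f i))
    (hint : ∀ i j, Integrable (fun x => f i x * conj (f j x)) μ)
    (G : ℝ → Matrix (Fin N) (Fin N) ℂ)
    (hG : ∀ t i j, G t i j =
      ∫ x, f i x * conj (f j x) * (Real.exp (-(t * ψ x)) : ℂ) ∂μ)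
    (hG0 : G 0 = 1) :
    HasDerivAt (fun t => (G t).det)
      (-((∫ x, (∑ i, ‖f i x‖ ^ 2) * ψ x ∂μ : ℝ) : ℂ)) 0 := by
  set D : Matrix (Fin N) (Fin N) ℂ :=
    fun i j => ∫ x, f i x * conj (f j x) * (-(ψ x) : ℂ) ∂μ with hD
  have hmeas : ∀ i j, Measurable (fun x => f i x * conj (f j x)) :=
    fun i j => (hfm i).mul (Complex.continuous_conj.measurable.comp (hfm j))
  -- entrywise derivative
  have hEntry : ∀ i j, HasDerivAt (fun t => G t i j) (D i j) 0 := by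
    intro i j
    set F : ℝ → Ω → ℂ := fun t x => f i x * conj (f j x) * (Real.exp (-(t * ψ x)) : ℂ)
      with hF
    set F' : ℝ → Ω → ℂ := fun t x =>
      f i x * conj (f j x) * ((Real.exp (-(t * ψ x)) * (-ψ x) : ℝ) : ℂ) with hF'
    have hFmeas : ∀ t : ℝ, AEStronglyMeasurable (F t) μ := fun t =>
      ((hmeas i j).mul
        (Complex.measurable_ofReal.comp
          ((measurable_const.mul hψm).neg.exp))).aestronglyMeasurable
    have hF'meas : AEStronglyMeasurable (F' 0) μ :=
      ((hmeas i j).mul (Complex.measurable_ofReal.comp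
        ((((measurable_const.mul hψm).neg.exp)).mul hψm.neg))).aestronglyMeasurable
    have hbound : ∀ᵐ x ∂μ, ∀ t ∈ Metric.ball (0:ℝ) 1, ‖F' t x‖ ≤ ‖f i x * conj (f j x)‖ * (Real.exp Cψ * Cψ) := by
      refine Filter.Eventually.of_forall fun x => fun t ht => ?_
      have ht1 : |t| ≤ 1 := by
        have := Metric.mem_ball.1 ht
        rw [Real.dist_eq, sub_zero] at this
        exact this.le
      have hexp : Real.exp (-(t * ψ x)) ≤ Real.exp Cψ := by
        apply Real.exp_le_exp.2
        calc -(t * ψ x) ≤ |t * ψ x| := neg_le_abs _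
          _ = |t| * |ψ x| := abs_mul _ _
          _ ≤ 1 * Cψ := mul_le_mul ht1 (hψb x) (abs_nonneg _) zero_le_one
          _ = Cψ := one_mul _
      have : ‖F' t x‖ = ‖f i x * conj (f j x)‖ * (Real.exp (-(t * ψ x)) * |ψ x|) := by
        rw [hF', norm_mul, Complex.norm_real, Real.norm_eq_abs, abs_mul, abs_neg,
          abs_of_pos (Real.exp_pos _)]
      rw [this]
      have hψx : (0:ℝ) ≤ Cψ := (abs_nonneg _).trans (hψb x)
      gcongr
      exact hψb x
    have hbint : Integrable (fun x => ‖f i x * conj (f j x)‖ * (Real.exp Cψ * Cψ)) μ := (hint i j).norm.mul_const _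
    have hdiff : ∀ᵐ x ∂μ, ∀ t ∈ Metric.ball (0:ℝ) 1, HasDerivAt (F · x) (F' t x) t := by
      refine Filter.Eventually.of_forall fun x t _ => ?_
      have h1 : HasDerivAt (fun t : ℝ => t * ψ x) (ψ x) t := hasDerivAt_mul_const _
      have h2 := h1.neg.exp
      have h3 := h2.ofReal_comp
      exact HasDerivAt.const_mul (f i x * conj (f j x)) h3
    have hFint : Integrable (F 0) μ := by
      have : F 0 = fun x => f i x * conj (f j x) := by
        funext x; simp [hF]
      rw [this]; exact hint i j
    have key := hasDerivAt_integral_of_dominated_loc_of_deriv_le (μ := μ) (F := F)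
      (F' := F') (x₀ := (0:ℝ)) (bound := fun x => ‖f i x * conj (f j x)‖ * (Real.exp Cψ * Cψ)) (Metric.ball_mem_nhds 0 one_pos)
      (Filter.Eventually.of_forall hFmeas) hFint hF'meas hbound hbint hdiff
    have e1 : (fun t => G t i j) = fun t => ∫ x, F t x ∂μ := funext fun t => hG t i j
    have e2 : D i j = ∫ x, F' 0 x ∂μ := by
      rw [hD]
      refine integral_congr_ae (Filter.Eventually.of_forall fun x => ?_)
      simp [hF']
    rw [e1, e2]
    exact key.2
  -- integrability of |f i|² ψ
  have habs : ∀ i, Integrable (fun x => ‖f i x‖ ^ 2) μ := fun i =>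
    (hint i i).norm.congr (Filter.Eventually.of_forall fun x => by
      simp [norm_mul, Complex.norm_conj, sq])
  have hInt : ∀ i, Integrable (fun x => ‖f i x‖ ^ 2 * ψ x) μ := by
    intro i
    have h1 : Integrable (fun x => ψ x * ‖f i x‖ ^ 2) μ :=
      Integrable.bdd_mul (habs i) hψm.aestronglyMeasurable
        (Filter.Eventually.of_forall fun x => by simpa using hψb x)
    exact h1.congr (Filter.Eventually.of_forall fun x => mul_comm _ _)
  have hDii : ∀ i, D i i = -((∫ x, ‖f i x‖ ^ 2 * ψ x ∂μ : ℝ) : ℂ) := by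
    intro i
    have hpt : ∀ x, f i x * conj (f i x) * (-(ψ x) : ℂ) =
        ((-(‖f i x‖ ^ 2 * ψ x) : ℝ) : ℂ) := fun x => by
      rw [Complex.mul_conj, ← Complex.sq_norm]
      push_cast
      ring
    have e : D i i = ∫ x, ((-(‖f i x‖ ^ 2 * ψ x) : ℝ) : ℂ) ∂μ := by
      rw [hD]
      exact integral_congr_ae (Filter.Eventually.of_forall hpt)
    have e2 : ∫ x, ((-(‖f i x‖ ^ 2 * ψ x) : ℝ) : ℂ) ∂μ
        = ((∫ x, -(‖f i x‖ ^ 2 * ψ x) ∂μ : ℝ) : ℂ) := integral_ofReal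
    rw [e, e2, integral_neg, Complex.ofReal_neg]
  have hsum : (∫ x, (∑ i, ‖f i x‖ ^ 2) * ψ x ∂μ)
      = ∑ i, ∫ x, ‖f i x‖ ^ 2 * ψ x ∂μ := by
    rw [← integral_finset_sum _ fun i _ => hInt i]
    congr 1
    funext x
    rw [Finset.sum_mul]
  have h := det_hasDerivAt_one G D hEntry hG0
  have e : ∑ i, D i i = -((∫ x, (∑ i, ‖f i x‖ ^ 2) * ψ x ∂μ : ℝ) : ℂ) := by
    rw [hsum, Complex.ofReal_sum, ← Finset.sum_neg_distrib]
    exact Finset.sum_congr rfl fun i _ => hDii i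
  exact e ▸ h
end

section
/- In a finite cochain complex of finite-dimensional complex inner product spaces, fix λ > 0 and for each q let H_q(λ) be the span of the eigenvectors of Δ_q with eigenvalue in the open interval (0, λ), N_q(λ) := H_q(λ) ∩ range(d_q*), and N_{−1}(λ) := 0. Then for every 0 ≤ q ≤ n: det(Δ_q|_{H_q(λ)}) = det(Δ_{q−1}|_{N_{q−1}(λ)}) · det(Δ_q|_{N_q(λ)}). -/
/-- The Laplacian `Δ_q := d_{q−1} ∘ d_{q−1}* + d_q* ∘ d_q` of a cochain complex
`d : ∀ q, V q →ₗ[ℂ] V (q+1)` of finite-dimensional complex inner product spaces (indexed by `ℕ`,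
with the convention `d_{−1} = 0`, so that `Δ_0 = d_0* ∘ d_0`). -/
noncomputable def Delta {V : ℕ → Type*} [∀ q, NormedAddCommGroup (V q)]
    [∀ q, InnerProductSpace ℂ (V q)] [∀ q, FiniteDimensional ℂ (V q)]
    (d : ∀ q, V q →ₗ[ℂ] V (q + 1)) : ∀ q, V q →ₗ[ℂ] V q
  | 0 => LinearMap.adjoint (d 0) ∘ₗ d 0
  | (q + 1) => d q ∘ₗ LinearMap.adjoint (d q) + LinearMap.adjoint (d (q + 1)) ∘ₗ d (q + 1)

/-- `H_q(λ)`: the span of the eigenvectors of `Δ_q` with (real) eigenvalue in `(0, λ)`. -/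
noncomputable def smallSpace {V : ℕ → Type*} [∀ q, NormedAddCommGroup (V q)]
    [∀ q, InnerProductSpace ℂ (V q)] [∀ q, FiniteDimensional ℂ (V q)]
    (d : ∀ q, V q →ₗ[ℂ] V (q + 1)) (lam : ℝ) (q : ℕ) : Submodule ℂ (V q) :=
  ⨆ (μ : ℝ) (_ : μ ∈ Set.Ioo (0 : ℝ) lam), Module.End.eigenspace (Delta d q) (μ : ℂ)

/-- `N_q(λ) := H_q(λ) ∩ range d_q*`. -/
noncomputable def Nspace {V : ℕ → Type*} [∀ q, NormedAddCommGroup (V q)]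
    [∀ q, InnerProductSpace ℂ (V q)] [∀ q, FiniteDimensional ℂ (V q)]
    (d : ∀ q, V q →ₗ[ℂ] V (q + 1)) (lam : ℝ) (q : ℕ) : Submodule ℂ (V q) :=
  smallSpace d lam q ⊓ LinearMap.range (LinearMap.adjoint (d q))


open LinearMap Module

section DetAux

variable {K M N : Type*} [Field K] [AddCommGroup M] [Module K M] [AddCommGroup N] [Module K N]

lemma detAux_prodMap [FiniteDimensional K M] [FiniteDimensional K N]
    (f : M →ₗ[K] M) (g : N →ₗ[K] N) :
    LinearMap.det (f.prodMap g) = LinearMap.det f * LinearMap.det g := by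
  classical
  let bM := Module.finBasis K M
  let bN := Module.finBasis K N
  rw [← LinearMap.det_toMatrix (bM.prod bN), LinearMap.toMatrix_prodMap,
    Matrix.det_fromBlocks_zero₂₁, LinearMap.det_toMatrix, LinearMap.det_toMatrix]

lemma detAux_conj (f : M →ₗ[K] M) (g : N →ₗ[K] N) (e : M ≃ₗ[K] N)
    (h : ∀ x, g (e x) = e (f x)) : LinearMap.det g = LinearMap.det f := by
  have hg : g = (e : M →ₗ[K] N) ∘ₗ f ∘ₗ (e.symm : N →ₗ[K] M) := by
    ext y
    simp only [coe_comp, Function.comp_apply, LinearEquiv.coe_coe]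
    rw [← h, e.apply_symm_apply]
  rw [hg, LinearMap.det_conj]

lemma detAux_restrict_congr {V' : Type*} [AddCommGroup V'] [Module K V'] (f : V' →ₗ[K] V')
    {p p' : Submodule K V'} (h : p = p') (hp : ∀ x ∈ p, f x ∈ p) (hp' : ∀ x ∈ p', f x ∈ p') :
    LinearMap.det (f.restrict hp) = LinearMap.det (f.restrict hp') := by
  subst h; rfl

lemma detAux_restrict_sup {V' : Type*} [AddCommGroup V'] [Module K V'] [FiniteDimensional K V']
    (f : V' →ₗ[K] V') {A N W : Submodule K V'} (hW : A ⊔ N = W) (hd : Disjoint A N)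
    (hfA : ∀ x ∈ A, f x ∈ A) (hfN : ∀ x ∈ N, f x ∈ N) (hfW : ∀ x ∈ W, f x ∈ W) :
    LinearMap.det (f.restrict hfW) =
      LinearMap.det (f.restrict hfA) * LinearMap.det (f.restrict hfN) := by
  have hAW : A ≤ W := hW ▸ le_sup_left
  have hNW : N ≤ W := hW ▸ le_sup_right
  set A' : Submodule K W := A.comap W.subtype with hA'def
  set N' : Submodule K W := N.comap W.subtype with hN'def
  have hcompl : IsCompl A' N' := by
    constructor
    · rw [disjoint_iff_inf_le]
      rintro x ⟨hxA, hxN⟩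
      have hx0 : (x : V') = 0 := (Submodule.disjoint_def.mp hd) _ hxA hxN
      simpa [Submodule.mem_bot] using Subtype.ext hx0
    · rw [codisjoint_iff_le_sup]
      rintro ⟨x, hx⟩ -
      have hx' : x ∈ A ⊔ N := hW.symm ▸ hx
      obtain ⟨a, haA, b, hbN, rfl⟩ := Submodule.mem_sup.mp hx'
      exact Submodule.mem_sup.mpr ⟨⟨a, hAW haA⟩, haA, ⟨b, hNW hbN⟩, hbN, rfl⟩
  set fW := f.restrict hfW with hfWdef
  have hfA' : ∀ x ∈ A', fW x ∈ A' := fun x hx => by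
    exact hfA _ hx
  have hfN' : ∀ x ∈ N', fW x ∈ N' := fun x hx => by
    exact hfN _ hx
  set e := Submodule.prodEquivOfIsCompl A' N' hcompl with hedef
  have key : fW = (e : A' × N' →ₗ[K] W) ∘ₗ
      ((fW.restrict hfA').prodMap (fW.restrict hfN')) ∘ₗ (e.symm : W →ₗ[K] A' × N') := by
    apply LinearMap.ext
    intro x
    obtain ⟨⟨a, b⟩, rfl⟩ := e.surjective x
    simp only [coe_comp, Function.comp_apply, LinearEquiv.coe_coe, e.symm_apply_apply]
    have he : ∀ p : A' × N', e p = (p.1 : W) + (p.2 : W) := fun p => rfl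
    rw [he, he, map_add]
    rfl
  rw [key, LinearMap.det_conj, detAux_prodMap]
  congr 1
  · refine (detAux_conj (fW.restrict hfA') (f.restrict hfA)
      (Submodule.comapSubtypeEquivOfLe hAW) fun x => ?_).symm
    apply Subtype.ext
    rfl
  · refine (detAux_conj (fW.restrict hfN') (f.restrict hfN)
      (Submodule.comapSubtypeEquivOfLe hNW) fun x => ?_).symm
    apply Subtype.ext
    rfl

end DetAux

section ComplexAux

variable {V : ℕ → Type*} [∀ q, NormedAddCommGroup (V q)]
    [∀ q, InnerProductSpace ℂ (V q)] [∀ q, FiniteDimensional ℂ (V q)]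
    {d : ∀ q, V q →ₗ[ℂ] V (q + 1)}

lemma dd_zero (hcx : ∀ q, d (q + 1) ∘ₗ d q = 0) (q : ℕ) (x : V q) :
    d (q + 1) (d q x) = 0 := by
  have h := hcx q
  rw [LinearMap.ext_iff] at h
  simpa using h x

lemma aa_zero (hcx : ∀ q, d (q + 1) ∘ₗ d q = 0) (q : ℕ) (y : V (q + 2)) :
    LinearMap.adjoint (d q) (LinearMap.adjoint (d (q + 1)) y) = 0 := by
  have h : LinearMap.adjoint (d q) ∘ₗ LinearMap.adjoint (d (q + 1)) = 0 := by
    rw [← LinearMap.adjoint_comp, hcx q, map_zero]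
  rw [LinearMap.ext_iff] at h
  simpa using h y

lemma delta_comm (hcx : ∀ q, d (q + 1) ∘ₗ d q = 0) (q : ℕ) (x : V q) :
    Delta d (q + 1) (d q x) = d q (Delta d q x) := by
  cases q with
  | zero =>
    show d 0 (LinearMap.adjoint (d 0) (d 0 x)) + LinearMap.adjoint (d 1) (d 1 (d 0 x)) =
      d 0 (LinearMap.adjoint (d 0) (d 0 x))
    rw [dd_zero hcx 0 x, map_zero, add_zero]
  | succ p =>
    show d (p + 1) (LinearMap.adjoint (d (p + 1)) (d (p + 1) x)) +
        LinearMap.adjoint (d (p + 2)) (d (p + 2) (d (p + 1) x)) =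
      d (p + 1) (d p (LinearMap.adjoint (d p) x) + LinearMap.adjoint (d (p + 1)) (d (p + 1) x))
    rw [dd_zero hcx (p + 1), map_zero, add_zero, map_add, dd_zero hcx p, zero_add]

lemma delta_comm' (hcx : ∀ q, d (q + 1) ∘ₗ d q = 0) (q : ℕ) (y : V (q + 1)) :
    Delta d q (LinearMap.adjoint (d q) y) = LinearMap.adjoint (d q) (Delta d (q + 1) y) := by
  cases q with
  | zero =>
    show LinearMap.adjoint (d 0) (d 0 (LinearMap.adjoint (d 0) y)) =
      LinearMap.adjoint (d 0) (d 0 (LinearMap.adjoint (d 0) y) +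
        LinearMap.adjoint (d 1) (d 1 y))
    rw [map_add, aa_zero hcx 0 (d 1 y), add_zero]
  | succ p =>
    show d p (LinearMap.adjoint (d p) (LinearMap.adjoint (d (p + 1)) y)) +
        LinearMap.adjoint (d (p + 1)) (d (p + 1) (LinearMap.adjoint (d (p + 1)) y)) =
      LinearMap.adjoint (d (p + 1)) (d (p + 1) (LinearMap.adjoint (d (p + 1)) y) +
        LinearMap.adjoint (d (p + 2)) (d (p + 2) y))
    rw [aa_zero hcx p y, map_zero, zero_add, map_add, aa_zero hcx (p + 1) (d (p + 2) y), add_zero]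

lemma delta_on_adj_range (hcx : ∀ q, d (q + 1) ∘ₗ d q = 0) (q : ℕ) (y : V (q + 1)) :
    Delta d q (LinearMap.adjoint (d q) y) =
      LinearMap.adjoint (d q) (d q (LinearMap.adjoint (d q) y)) := by
  cases q with
  | zero => rfl
  | succ p =>
    show d p (LinearMap.adjoint (d p) (LinearMap.adjoint (d (p + 1)) y)) +
        LinearMap.adjoint (d (p + 1)) (d (p + 1) (LinearMap.adjoint (d (p + 1)) y)) =
      LinearMap.adjoint (d (p + 1)) (d (p + 1) (LinearMap.adjoint (d (p + 1)) y))
    rw [aa_zero hcx p y, map_zero, zero_add]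

lemma delta_on_range (hcx : ∀ q, d (q + 1) ∘ₗ d q = 0) (q : ℕ) (y : V q) :
    Delta d (q + 1) (d q y) = d q (LinearMap.adjoint (d q) (d q y)) := by
  show d q (LinearMap.adjoint (d q) (d q y)) +
      LinearMap.adjoint (d (q + 1)) (d (q + 1) (d q y)) =
    d q (LinearMap.adjoint (d q) (d q y))
  rw [dd_zero hcx q y, map_zero, add_zero]

end ComplexAux

section SmallAux

set_option linter.unusedSectionVars false

variable {V : ℕ → Type*} [∀ q, NormedAddCommGroup (V q)]
    [∀ q, InnerProductSpace ℂ (V q)] [∀ q, FiniteDimensional ℂ (V q)]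
    {d : ∀ q, V q →ₗ[ℂ] V (q + 1)} {lam : ℝ}

lemma st8_eigen_le_small {μ : ℝ} (hμ : μ ∈ Set.Ioo (0 : ℝ) lam) (q : ℕ) :
    Module.End.eigenspace (Delta d q) (μ : ℂ) ≤ smallSpace d lam q :=
  le_iSup₂ (f := fun μ (_ : μ ∈ Set.Ioo (0 : ℝ) lam) =>
    Module.End.eigenspace (Delta d q) (μ : ℂ)) μ hμ

lemma st8_small_map (hcx : ∀ q, d (q + 1) ∘ₗ d q = 0) (q : ℕ) :
    ∀ x ∈ smallSpace d lam q, d q x ∈ smallSpace d lam (q + 1) := by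
  intro x hx
  have hle : Submodule.map (d q) (smallSpace d lam q) ≤ smallSpace d lam (q + 1) := by
    unfold smallSpace
    simp_rw [Submodule.map_iSup]
    refine iSup₂_le fun μ hμ => ?_
    refine le_trans ?_ (le_iSup₂ (f := fun μ (_ : μ ∈ Set.Ioo (0 : ℝ) lam) =>
      Module.End.eigenspace (Delta d (q + 1)) (μ : ℂ)) μ hμ)
    rintro _ ⟨y, hy, rfl⟩
    simp only [SetLike.mem_coe] at hy
    rw [Module.End.mem_eigenspace_iff] at hy
    rw [Module.End.mem_eigenspace_iff]
    rw [delta_comm hcx q y, hy, map_smul]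
  exact hle (Submodule.mem_map.mpr ⟨x, hx, rfl⟩)

lemma st8_small_map' (hcx : ∀ q, d (q + 1) ∘ₗ d q = 0) (q : ℕ) :
    ∀ x ∈ smallSpace d lam (q + 1), LinearMap.adjoint (d q) x ∈ smallSpace d lam q := by
  intro x hx
  have hle : Submodule.map (LinearMap.adjoint (d q)) (smallSpace d lam (q + 1)) ≤
      smallSpace d lam q := by
    unfold smallSpace
    simp_rw [Submodule.map_iSup]
    refine iSup₂_le fun μ hμ => ?_
    refine le_trans ?_ (le_iSup₂ (f := fun μ (_ : μ ∈ Set.Ioo (0 : ℝ) lam) =>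
      Module.End.eigenspace (Delta d q) (μ : ℂ)) μ hμ)
    rintro _ ⟨y, hy, rfl⟩
    simp only [SetLike.mem_coe] at hy
    rw [Module.End.mem_eigenspace_iff] at hy
    rw [Module.End.mem_eigenspace_iff]
    rw [delta_comm' hcx q y, hy, map_smul]
  exact hle (Submodule.mem_map.mpr ⟨x, hx, rfl⟩)

lemma st8_small_inj (q : ℕ) :
    ∀ x ∈ smallSpace d lam q, Delta d q x = 0 → x = 0 := by
  intro x hx h0
  have hind := Module.End.eigenspaces_iSupIndep (Delta d q)
  have hdisj := hind.disjoint_biSup (x := (0 : ℂ)) (y := {c : ℂ | c ≠ 0}) (by simp)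
  have hsub : smallSpace d lam q ≤
      ⨆ c ∈ {c : ℂ | c ≠ 0}, Module.End.eigenspace (Delta d q) c := by
    unfold smallSpace
    refine iSup₂_le fun μ hμ => ?_
    exact le_iSup₂ (f := fun c (_ : c ∈ {c : ℂ | c ≠ 0}) =>
      Module.End.eigenspace (Delta d q) c) (μ : ℂ)
      (Complex.ofReal_ne_zero.mpr (ne_of_gt hμ.1))
  have h0' : x ∈ Module.End.eigenspace (Delta d q) 0 := by
    rw [Module.End.mem_eigenspace_iff]; simp [h0]
  exact (Submodule.disjoint_def.mp hdisj) x h0' (hsub hx)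

lemma st8_range_disjoint (hcx : ∀ q, d (q + 1) ∘ₗ d q = 0) (q : ℕ) :
    Disjoint (LinearMap.range (d q)) (LinearMap.range (LinearMap.adjoint (d (q + 1)))) := by
  rw [Submodule.disjoint_def]
  rintro x ⟨a, rfl⟩ ⟨b, hb⟩
  have h : (inner ℂ (d q a) (d q a) : ℂ) = 0 := by
    nth_rewrite 2 [← hb]
    rw [LinearMap.adjoint_inner_right, dd_zero hcx q a, inner_zero_left]
  exact inner_self_eq_zero.mp h

lemma st8_small_zero_le : smallSpace d lam 0 ≤ LinearMap.range (LinearMap.adjoint (d 0)) := by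
  unfold smallSpace
  refine iSup₂_le fun μ hμ => fun x hx => ?_
  rw [Module.End.mem_eigenspace_iff] at hx
  have hμ0 : (μ : ℂ) ≠ 0 := Complex.ofReal_ne_zero.mpr (ne_of_gt hμ.1)
  refine ⟨(μ : ℂ)⁻¹ • d 0 x, ?_⟩
  rw [map_smul]
  show (μ : ℂ)⁻¹ • Delta d 0 x = x
  rw [hx, smul_smul, inv_mul_cancel₀ hμ0, one_smul]

lemma st8_small_le (hcx : ∀ q, d (q + 1) ∘ₗ d q = 0) (q : ℕ) :
    smallSpace d lam (q + 1) ≤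
      (smallSpace d lam (q + 1) ⊓ LinearMap.range (d q)) ⊔ Nspace d lam (q + 1) := by
  conv_lhs => rw [smallSpace]
  refine iSup₂_le fun μ hμ => fun x hx => ?_
  rw [Module.End.mem_eigenspace_iff] at hx
  have hμ0 : (μ : ℂ) ≠ 0 := Complex.ofReal_ne_zero.mpr (ne_of_gt hμ.1)
  have hsplit : (μ : ℂ) • x = d q (LinearMap.adjoint (d q) x) +
      LinearMap.adjoint (d (q + 1)) (d (q + 1) x) := by rw [← hx]; rfl
  have hx' : x = (μ : ℂ)⁻¹ • d q (LinearMap.adjoint (d q) x) +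
      (μ : ℂ)⁻¹ • LinearMap.adjoint (d (q + 1)) (d (q + 1) x) := by
    rw [← smul_add, ← hsplit, smul_smul, inv_mul_cancel₀ hμ0, one_smul]
  rw [hx']
  refine Submodule.add_mem_sup ⟨?_, ?_⟩ ⟨?_, ?_⟩
  · -- a ∈ smallSpace (q+1)
    refine st8_eigen_le_small hμ (q + 1) ?_
    rw [Module.End.mem_eigenspace_iff]
    have hw : Delta d (q + 1) (d q (LinearMap.adjoint (d q) x)) =
        (μ : ℂ) • d q (LinearMap.adjoint (d q) x) := by
      rw [delta_comm hcx, delta_comm' hcx, hx, map_smul, map_smul]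
    rw [map_smul, hw, smul_comm]
  · exact ⟨(μ : ℂ)⁻¹ • LinearMap.adjoint (d q) x, by rw [map_smul]⟩
  · refine st8_eigen_le_small hμ (q + 1) ?_
    rw [Module.End.mem_eigenspace_iff]
    have hw : Delta d (q + 1) (LinearMap.adjoint (d (q + 1)) (d (q + 1) x)) =
        (μ : ℂ) • LinearMap.adjoint (d (q + 1)) (d (q + 1) x) := by
      rw [delta_comm' hcx, delta_comm hcx, hx, map_smul, map_smul]
    rw [map_smul, hw, smul_comm]
  · exact ⟨(μ : ℂ)⁻¹ • d (q + 1) x, by rw [map_smul]⟩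

end SmallAux

/-- In a finite cochain complex of finite-dimensional complex inner product
spaces, fix `λ > 0`, let `H_q(λ)` be the span of the eigenvectors of `Δ_q` with eigenvalue in
`(0, λ)`, `N_q(λ) := H_q(λ) ∩ range d_q*` and `N_{−1}(λ) := 0`. These subspaces are
`Δ_q`-invariant and for every `q`:
`det (Δ_q|_{H_q(λ)}) = det (Δ_{q−1}|_{N_{q−1}(λ)}) · det (Δ_q|_{N_q(λ)})`
(the `q = 0` case says `det (Δ_0|_{H_0(λ)}) = det (Δ_0|_{N_0(λ)})`, since the determinant on the
zero subspace `N_{−1}(λ)` is `1`). -/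
theorem stmt8 {V : ℕ → Type*} [∀ q, NormedAddCommGroup (V q)]
    [∀ q, InnerProductSpace ℂ (V q)] [∀ q, FiniteDimensional ℂ (V q)]
    (n : ℕ) (d : ∀ q, V q →ₗ[ℂ] V (q + 1))
    (hcomplex : ∀ q, d (q + 1) ∘ₗ d q = 0)
    (hfin : ∀ q, n ≤ q → d q = 0)
    (lam : ℝ) (hlam : 0 < lam)
    (hH : ∀ q, ∀ x ∈ smallSpace d lam q, Delta d q x ∈ smallSpace d lam q)
    (hN : ∀ q, ∀ x ∈ Nspace d lam q, Delta d q x ∈ Nspace d lam q) :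
    LinearMap.det ((Delta d 0).restrict (hH 0)) =
        LinearMap.det ((Delta d 0).restrict (hN 0)) ∧
      ∀ q, LinearMap.det ((Delta d (q + 1)).restrict (hH (q + 1))) =
        LinearMap.det ((Delta d q).restrict (hN q)) *
          LinearMap.det ((Delta d (q + 1)).restrict (hN (q + 1))) := by
  constructor
  · have h0 : Nspace d lam 0 = smallSpace d lam 0 :=
      inf_eq_left.mpr st8_small_zero_le
    exact (detAux_restrict_congr (Delta d 0) h0 (hN 0) (hH 0)).symm
  · intro q
    set A : Submodule ℂ (V (q + 1)) :=
      smallSpace d lam (q + 1) ⊓ LinearMap.range (d q) with hAdef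
    have hfA : ∀ x ∈ A, Delta d (q + 1) x ∈ A := by
      rintro x ⟨hx1, y, rfl⟩
      exact ⟨hH (q + 1) _ hx1, ⟨Delta d q y, (delta_comm hcomplex q y).symm⟩⟩
    have hsup : A ⊔ Nspace d lam (q + 1) = smallSpace d lam (q + 1) :=
      le_antisymm (sup_le inf_le_left inf_le_left) (st8_small_le hcomplex q)
    have hdisj : Disjoint A (Nspace d lam (q + 1)) :=
      (st8_range_disjoint hcomplex q).mono inf_le_right inf_le_right
    rw [detAux_restrict_sup (Delta d (q + 1)) hsup hdisj hfA (hN (q + 1)) (hH (q + 1))]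
    congr 1
    -- det (restrict hfA) = det ((Delta d q).restrict (hN q))
    have hmapF : ∀ x ∈ Nspace d lam q, d q x ∈ A := fun x hx =>
      ⟨st8_small_map hcomplex q x hx.1, ⟨x, rfl⟩⟩
    have hmapG : ∀ x ∈ A, LinearMap.adjoint (d q) x ∈ Nspace d lam q := fun x hx =>
      ⟨st8_small_map' hcomplex q x hx.1, ⟨x, rfl⟩⟩
    set F : Nspace d lam q →ₗ[ℂ] A := (d q).restrict hmapF with hFdef
    set G : A →ₗ[ℂ] Nspace d lam q := (LinearMap.adjoint (d q)).restrict hmapG with hGdef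
    have hFinj : Function.Injective F := by
      refine (injective_iff_map_eq_zero F).mpr fun x hx0 => ?_
      have hx0' : d q (x : V q) = 0 := congrArg Subtype.val hx0
      have hΔ : Delta d q (x : V q) = 0 := by
        rcases x.2.2 with ⟨y, hy⟩
        rw [← hy, delta_on_adj_range hcomplex, hy, hx0', map_zero]
      exact Subtype.ext (st8_small_inj q (x : V q) x.2.1 hΔ)
    have hGinj : Function.Injective G := by
      refine (injective_iff_map_eq_zero G).mpr fun x hx0 => ?_
      have hx0' : LinearMap.adjoint (d q) (x : V (q + 1)) = 0 := congrArg Subtype.val hx0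
      have hΔ : Delta d (q + 1) (x : V (q + 1)) = 0 := by
        rcases x.2.2 with ⟨y, hy⟩
        rw [← hy, delta_on_range hcomplex, hy, hx0', map_zero]
      exact Subtype.ext (st8_small_inj (q + 1) (x : V (q + 1)) x.2.1 hΔ)
    have hrank : Module.finrank ℂ (Nspace d lam q) = Module.finrank ℂ A :=
      le_antisymm (LinearMap.finrank_le_finrank_of_injective hFinj)
        (LinearMap.finrank_le_finrank_of_injective hGinj)
    set e := LinearMap.linearEquivOfInjective F hFinj hrank with hedef
    refine detAux_conj ((Delta d q).restrict (hN q)) ((Delta d (q + 1)).restrict hfA) e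
      fun x => ?_
    apply Subtype.ext
    show Delta d (q + 1) ((e x : V (q + 1))) = (e ((Delta d q).restrict (hN q) x) : V (q + 1))
    rw [hedef, LinearMap.linearEquivOfInjective_apply, LinearMap.linearEquivOfInjective_apply]
    show Delta d (q + 1) ((F x : V (q + 1))) = (F ((Delta d q).restrict (hN q) x) : V (q + 1))
    rw [hFdef, LinearMap.restrict_coe_apply, LinearMap.restrict_coe_apply,
      LinearMap.restrict_coe_apply]
    exact delta_comm hcomplex q (x : V q)
end

section
/- In a finite cochain complex of finite-dimensional complex inner product spaces, fix λ > 0 and for each q let H_q(λ) be the span of the eigenvectors of Δ_q with eigenvalue in the open interval (0, λ) and N_q(λ) := H_q(λ) ∩ range(d_q*). Then the following identity of positive real numbers holds: ∏_{q=1}^{n} det(Δ_q|_{H_q(λ)})^{(−1)^{q+1} q} = ∏_{q=0}^{n−1} det(Δ_q|_{N_q(λ)})^{(−1)^q}, where the exponents are integers. -/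
set_option linter.unusedSectionVars false
set_option maxHeartbeats 1000000



open LinearMap in
/-- Determinant of a restriction to a sum of two disjoint invariant subspaces. -/
lemma det_restrict_sup' {M : Type*} [AddCommGroup M] [Module ℂ M]
    {f : M →ₗ[ℂ] M} {p q W : Submodule ℂ M} [FiniteDimensional ℂ p] [FiniteDimensional ℂ q]
    (hdisj : p ⊓ q = ⊥) (hsup : p ⊔ q = W)
    (hp : ∀ x ∈ p, f x ∈ p) (hq : ∀ x ∈ q, f x ∈ q) (hW : ∀ x ∈ W, f x ∈ W) :
    LinearMap.det (f.restrict hW)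
      = LinearMap.det (f.restrict hp) * LinearMap.det (f.restrict hq) := by
  classical
  have hple : p ≤ W := hsup ▸ le_sup_left
  have hqle : q ≤ W := hsup ▸ le_sup_right
  set L : (p × q) →ₗ[ℂ] W :=
    (Submodule.inclusion hple).coprod (Submodule.inclusion hqle) with hL
  have hLapply : ∀ x : p × q, (L x : M) = (x.1 : M) + (x.2 : M) := by
    rintro ⟨a, b⟩; rfl
  have hLinj : Function.Injective L := by
    rintro ⟨a, b⟩ ⟨a', b'⟩ hab
    have h : (a : M) + b = (a' : M) + b' := by
      have := congrArg (Subtype.val) hab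
      rwa [hLapply, hLapply] at this
    have h1 : (a : M) - a' = (b' : M) - b := by
      rw [sub_eq_sub_iff_add_eq_add, h, add_comm]
    have h2 : (a : M) - a' ∈ p ⊓ q :=
      ⟨sub_mem a.2 a'.2, h1 ▸ sub_mem b'.2 b.2⟩
    rw [hdisj, Submodule.mem_bot, sub_eq_zero] at h2
    have h3 : (b : M) = b' := by
      have := h; rw [h2] at this; exact (add_right_injective _ this).symm ▸ rfl
    exact Prod.ext (Subtype.ext h2) (Subtype.ext h3)
  have hLsurj : Function.Surjective L := by
    rintro ⟨w, hw⟩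
    have hw' : w ∈ p ⊔ q := hsup.symm ▸ hw
    obtain ⟨y, hy, z, hz, hyz⟩ := Submodule.mem_sup.mp hw'
    exact ⟨(⟨y, hy⟩, ⟨z, hz⟩), Subtype.ext (by simpa [hLapply] using hyz)⟩
  set e := LinearEquiv.ofBijective L ⟨hLinj, hLsurj⟩ with he
  have hcomm : (f.restrict hW) ∘ₗ (e : (p × q) →ₗ[ℂ] W)
      = (e : (p × q) →ₗ[ℂ] W) ∘ₗ (f.restrict hp).prodMap (f.restrict hq) := by
    apply LinearMap.ext
    rintro ⟨a, b⟩
    apply Subtype.ext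
    have h1 : ((e : (p × q) →ₗ[ℂ] W) (a, b) : M) = (a : M) + b := hLapply _
    simp only [LinearMap.comp_apply, LinearMap.prodMap_apply, LinearMap.restrict_coe_apply]
    rw [h1]
    have h2 : ((e : (p × q) →ₗ[ℂ] W) (f.restrict hp a, f.restrict hq b) : M)
        = (f.restrict hp a : M) + (f.restrict hq b : M) := hLapply _
    rw [h2, LinearMap.restrict_coe_apply, LinearMap.restrict_coe_apply, map_add]
  have heq : f.restrict hW = (e : (p × q) →ₗ[ℂ] W)
      ∘ₗ ((f.restrict hp).prodMap (f.restrict hq)) ∘ₗ (e.symm : W →ₗ[ℂ] (p × q)) := by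
    apply LinearMap.ext
    intro w
    have : w = e (e.symm w) := (e.apply_symm_apply w).symm
    calc f.restrict hW w = f.restrict hW (e (e.symm w)) := by rw [← this]
      _ = ((f.restrict hW) ∘ₗ (e : (p × q) →ₗ[ℂ] W)) (e.symm w) := rfl
      _ = _ := by rw [hcomm]; rfl
  rw [heq, LinearMap.det_conj]
  set b₁ := Module.finBasis ℂ p
  set b₂ := Module.finBasis ℂ q
  rw [← LinearMap.det_toMatrix (b₁.prod b₂), LinearMap.toMatrix_prodMap,
    Matrix.det_fromBlocks_zero₂₁, LinearMap.det_toMatrix, LinearMap.det_toMatrix]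


/-- The determinant of an injective symmetric operator with nonnegative quadratic form is a
positive real number. -/
lemma det_isPosReal_of_symmetric {E : Type*} [NormedAddCommGroup E] [InnerProductSpace ℂ E]
    [FiniteDimensional ℂ E] {T : E →ₗ[ℂ] E} (hsym : T.IsSymmetric)
    (hpos : ∀ x : E, 0 ≤ (inner ℂ x (T x) : ℂ).re)
    (hinj : ∀ x, T x = 0 → x = 0) :
    ∃ r : ℝ, 0 < r ∧ LinearMap.det T = (r : ℂ) := by
  classical
  have hm : Module.finrank ℂ E = Module.finrank ℂ E := rfl
  set b := hsym.eigenvectorBasis hm with hb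
  set μ := hsym.eigenvalues hm with hμ
  have happly : ∀ i, T (b i) = (μ i : ℂ) • b i := fun i => hsym.apply_eigenvectorBasis hm i
  have hdet : LinearMap.det T = ∏ i, (μ i : ℂ) := by
    rw [← LinearMap.det_toMatrix b.toBasis]
    have hmat : LinearMap.toMatrix b.toBasis b.toBasis T
        = Matrix.diagonal (fun i => (μ i : ℂ)) := by
      ext i j
      rw [LinearMap.toMatrix_apply, OrthonormalBasis.coe_toBasis, happly j, map_smul,
        ← OrthonormalBasis.coe_toBasis, Module.Basis.repr_self]
      by_cases h : i = j
      · subst h; simp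
      · simp [Finsupp.single_apply, Matrix.diagonal_apply, h, Ne.symm h]
    rw [hmat, Matrix.det_diagonal]
  have hμpos : ∀ i, 0 < μ i := by
    intro i
    have hbi : ‖b i‖ = 1 := b.orthonormal.1 i
    have h1 : (inner ℂ (b i) (T (b i)) : ℂ).re = μ i := by
      rw [happly, inner_smul_right]
      have : (inner ℂ (b i) (b i) : ℂ) = 1 := by
        rw [inner_self_eq_norm_sq_to_K, hbi]; norm_num
      rw [this, mul_one, Complex.ofReal_re]
    have h2 : 0 ≤ μ i := h1 ▸ hpos (b i)
    rcases h2.lt_or_eq with h | h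
    · exact h
    · exfalso
      have hT0 : T (b i) = 0 := by rw [happly, ← h]; simp
      have hb0 : b i = 0 := hinj _ hT0
      have := b.toBasis.ne_zero i
      rw [OrthonormalBasis.coe_toBasis] at this
      exact this hb0
  refine ⟨∏ i, μ i, Finset.prod_pos (fun i _ => hμpos i), ?_⟩
  rw [hdet, Complex.ofReal_prod]


lemma telescope_prod (a : ℕ → ℂ) (ha : ∀ q, a q ≠ 0) (n : ℕ) :
    ∏ q ∈ Finset.Icc 1 n, (a q * a (q - 1)) ^ ((-1 : ℤ) ^ (q + 1) * q)
      = a n ^ ((-1 : ℤ) ^ (n + 1) * n)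
        * ∏ q ∈ Finset.range n, a q ^ ((-1 : ℤ) ^ q) := by
  induction n with
  | zero => simp
  | succ m ih =>
    rw [Finset.prod_Icc_succ_top (Nat.le_add_left 1 m), ih, Finset.prod_range_succ, mul_zpow]
    have key : a m ^ ((-1 : ℤ) ^ (m + 1) * (m : ℤ))
        * a m ^ ((-1 : ℤ) ^ (m + 1 + 1) * ((m + 1 : ℕ) : ℤ))
        = a m ^ ((-1 : ℤ) ^ m) := by
      rw [← zpow_add₀ (ha m)]
      congr 1
      have h1 : ((-1 : ℤ)) ^ (m + 1) = -(-1 : ℤ) ^ m := by rw [pow_succ]; ring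
      have h2 : ((-1 : ℤ)) ^ (m + 1 + 1) = (-1 : ℤ) ^ m := by rw [pow_succ, pow_succ]; ring
      rw [h1, h2]
      push_cast
      ring
    have hsimp : (m + 1 - 1 : ℕ) = m := rfl
    rw [hsimp, ← key]
    generalize a m ^ ((-1 : ℤ) ^ (m + 1) * (m : ℤ)) = X
    generalize a m ^ ((-1 : ℤ) ^ (m + 1 + 1) * ((m + 1 : ℕ) : ℤ)) = Y
    generalize a (m + 1) ^ ((-1 : ℤ) ^ (m + 1 + 1) * ((m + 1 : ℕ) : ℤ)) = Z
    ring

section Aux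

variable {V : ℕ → Type*} [∀ q, NormedAddCommGroup (V q)]
    [∀ q, InnerProductSpace ℂ (V q)] [∀ q, FiniteDimensional ℂ (V q)]
    (d : ∀ q, V q →ₗ[ℂ] V (q + 1))

/-- `Z_q(λ) := H_{q+1}(λ) ∩ range d_q`. -/
noncomputable def Zspace (lam : ℝ) (q : ℕ) : Submodule ℂ (V (q + 1)) :=
  smallSpace d lam (q + 1) ⊓ LinearMap.range (d q)

variable (hc : ∀ q, d (q + 1) ∘ₗ d q = 0)
include hc

lemma dd_apply (q : ℕ) (x : V q) : d (q + 1) (d q x) = 0 := by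
  simpa using LinearMap.ext_iff.mp (hc q) x

lemma adj_adj_apply (q : ℕ) (x : V (q + 2)) :
    LinearMap.adjoint (d q) (LinearMap.adjoint (d (q + 1)) x) = 0 := by
  have h : LinearMap.adjoint (d q) ∘ₗ LinearMap.adjoint (d (q + 1)) = 0 := by
    rw [← LinearMap.adjoint_comp, hc q, map_zero]
  simpa using LinearMap.ext_iff.mp h x

lemma Delta_d_apply (q : ℕ) (x : V q) :
    Delta d (q + 1) (d q x) = d q (Delta d q x) := by
  cases q with
  | zero => simp [Delta, dd_apply d hc]
  | succ m => simp [Delta, dd_apply d hc]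

lemma Delta_adj_apply (q : ℕ) (x : V (q + 1)) :
    Delta d q (LinearMap.adjoint (d q) x)
      = LinearMap.adjoint (d q) (Delta d (q + 1) x) := by
  cases q with
  | zero => simp [Delta, adj_adj_apply d hc]
  | succ m => simp [Delta, adj_adj_apply d hc]

omit hc

lemma sym_adj_comp {E F : Type*} [NormedAddCommGroup E] [InnerProductSpace ℂ E]
    [NormedAddCommGroup F] [InnerProductSpace ℂ F] [FiniteDimensional ℂ E]
    [FiniteDimensional ℂ F] (A : E →ₗ[ℂ] F) (x y : E) :
    (inner ℂ (LinearMap.adjoint A (A x)) y : ℂ) = inner ℂ x (LinearMap.adjoint A (A y)) :=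
  (LinearMap.adjoint_inner_left A y (A x)).trans
    (LinearMap.adjoint_inner_right A x (A y)).symm

lemma sym_comp_adj {E F : Type*} [NormedAddCommGroup E] [InnerProductSpace ℂ E]
    [NormedAddCommGroup F] [InnerProductSpace ℂ F] [FiniteDimensional ℂ E]
    [FiniteDimensional ℂ F] (A : E →ₗ[ℂ] F) (x y : F) :
    (inner ℂ (A (LinearMap.adjoint A x)) y : ℂ) = inner ℂ x (A (LinearMap.adjoint A y)) :=
  (LinearMap.adjoint_inner_right A (LinearMap.adjoint A x) y).symm.trans
    (LinearMap.adjoint_inner_left A (LinearMap.adjoint A y) x)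

lemma Delta_isSymmetric (q : ℕ) : (Delta d q).IsSymmetric := by
  intro x y
  cases q with
  | zero =>
    exact sym_adj_comp (d 0) x y
  | succ m =>
    show (inner ℂ (d m (LinearMap.adjoint (d m) x)
        + LinearMap.adjoint (d (m + 1)) (d (m + 1) x)) y : ℂ)
      = inner ℂ x (d m (LinearMap.adjoint (d m) y)
        + LinearMap.adjoint (d (m + 1)) (d (m + 1) y))
    rw [inner_add_left, inner_add_right, sym_comp_adj (d m) x y,
      sym_adj_comp (d (m + 1)) x y]

include hc

omit hc

lemma Delta_inner_nonneg (q : ℕ) (x : V q) :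
    0 ≤ (inner ℂ x (Delta d q x) : ℂ).re := by
  cases q with
  | zero =>
    have h : (inner ℂ x (Delta d 0 x) : ℂ) = inner ℂ (d 0 x) (d 0 x) := by
      have h0 : Delta d 0 x = LinearMap.adjoint (d 0) (d 0 x) := rfl
      rw [h0, LinearMap.adjoint_inner_right]
    rw [h]
    simpa using inner_self_nonneg (𝕜 := ℂ) (x := d 0 x)
  | succ m =>
    have h : (inner ℂ x (Delta d (m + 1) x) : ℂ)
        = inner ℂ (LinearMap.adjoint (d m) x) (LinearMap.adjoint (d m) x)
          + inner ℂ (d (m + 1) x) (d (m + 1) x) := by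
      have h0 : Delta d (m + 1) x = d m (LinearMap.adjoint (d m) x)
          + LinearMap.adjoint (d (m + 1)) (d (m + 1) x) := rfl
      rw [h0, inner_add_right, LinearMap.adjoint_inner_right,
        ← LinearMap.adjoint_inner_left]
    rw [h, Complex.add_re]
    have h1 := inner_self_nonneg (𝕜 := ℂ) (x := LinearMap.adjoint (d m) x)
    have h2 := inner_self_nonneg (𝕜 := ℂ) (x := d (m + 1) x)
    simp only [RCLike.re_to_complex] at h1 h2
    exact add_nonneg h1 h2

omit hc

variable (lam : ℝ)

lemma mem_smallSpace_of_eigen {q : ℕ} {μ : ℝ} (hμ : μ ∈ Set.Ioo (0 : ℝ) lam) {x : V q}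
    (hx : Delta d q x = (μ : ℂ) • x) : x ∈ smallSpace d lam q :=
  (le_iSup₂ (f := fun (μ : ℝ) (_ : μ ∈ Set.Ioo (0 : ℝ) lam) =>
    Module.End.eigenspace (Delta d q) (μ : ℂ)) μ hμ)
    (Module.End.mem_eigenspace_iff.mpr hx)

lemma smallSpace_ker (q : ℕ) {x : V q} (hx : x ∈ smallSpace d lam q)
    (h0 : Delta d q x = 0) : x = 0 := by
  have horth : smallSpace d lam q ≤ (ℂ ∙ x)ᗮ := by
    refine iSup₂_le fun μ hμ => fun y hy => ?_
    rw [Submodule.mem_orthogonal_singleton_iff_inner_right]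
    have hy' : Delta d q y = (μ : ℂ) • y := Module.End.mem_eigenspace_iff.mp hy
    have hμ0 : (μ : ℂ) ≠ 0 := by
      exact_mod_cast ne_of_gt hμ.1
    have : (μ : ℂ) * inner ℂ x y = 0 := by
      calc (μ : ℂ) * inner ℂ x y = inner ℂ x ((μ : ℂ) • y) := (inner_smul_right _ _ _).symm
        _ = inner ℂ x (Delta d q y) := by rw [hy']
        _ = inner ℂ (Delta d q x) y := (Delta_isSymmetric d q x y).symm
        _ = 0 := by rw [h0, inner_zero_left]
    exact (mul_eq_zero.mp this).resolve_left hμ0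
  have hxx : (inner ℂ x x : ℂ) = 0 := by
    have hx' : x ∈ (ℂ ∙ x)ᗮ := horth hx
    exact (Submodule.mem_orthogonal_singleton_iff_inner_right.mp hx')
  exact inner_self_eq_zero.mp hxx

include hc

lemma d_mem_smallSpace (q : ℕ) {x : V q} (hx : x ∈ smallSpace d lam q) :
    d q x ∈ smallSpace d lam (q + 1) := by
  have hle : smallSpace d lam q ≤ (smallSpace d lam (q + 1)).comap (d q) := by
    refine iSup₂_le fun μ hμ => fun y hy => ?_
    have hy' : Delta d q y = (μ : ℂ) • y := Module.End.mem_eigenspace_iff.mp hy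
    have : Delta d (q + 1) (d q y) = (μ : ℂ) • d q y := by
      rw [Delta_d_apply d hc q y, hy', map_smul]
    exact mem_smallSpace_of_eigen d lam hμ this
  exact hle hx

lemma adj_mem_smallSpace (q : ℕ) {x : V (q + 1)} (hx : x ∈ smallSpace d lam (q + 1)) :
    LinearMap.adjoint (d q) x ∈ smallSpace d lam q := by
  have hle : smallSpace d lam (q + 1) ≤ (smallSpace d lam q).comap (LinearMap.adjoint (d q)) := by
    refine iSup₂_le fun μ hμ => fun y hy => ?_
    have hy' : Delta d (q + 1) y = (μ : ℂ) • y := Module.End.mem_eigenspace_iff.mp hy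
    have : Delta d q (LinearMap.adjoint (d q) y) = (μ : ℂ) • LinearMap.adjoint (d q) y := by
      rw [Delta_adj_apply d hc q y, hy', map_smul]
    exact mem_smallSpace_of_eigen d lam hμ this
  exact hle hx

/-- On `range d_q*`, the Laplacian reduces to `d_q* ∘ d_q`. -/
lemma Delta_eq_B (q : ℕ) {x : V q} (hx : x ∈ LinearMap.range (LinearMap.adjoint (d q))) :
    Delta d q x = LinearMap.adjoint (d q) (d q x) := by
  cases q with
  | zero => rfl
  | succ m =>
    obtain ⟨y, rfl⟩ := hx
    have h0 : d m (LinearMap.adjoint (d m) (LinearMap.adjoint (d (m + 1)) y)) = 0 := by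
      rw [adj_adj_apply d hc m y, map_zero]
    have hD : Delta d (m + 1) (LinearMap.adjoint (d (m + 1)) y)
        = d m (LinearMap.adjoint (d m) (LinearMap.adjoint (d (m + 1)) y))
          + LinearMap.adjoint (d (m + 1)) (d (m + 1) (LinearMap.adjoint (d (m + 1)) y)) := rfl
    rw [hD, h0, zero_add]

/-- On `range d_q`, the Laplacian reduces to `d_q ∘ d_q*`. -/
lemma Delta_eq_A (q : ℕ) {x : V (q + 1)} (hx : x ∈ LinearMap.range (d q)) :
    Delta d (q + 1) x = d q (LinearMap.adjoint (d q) x) := by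
  obtain ⟨y, rfl⟩ := hx
  have h0 : LinearMap.adjoint (d (q + 1)) (d (q + 1) (d q y)) = 0 := by
    rw [dd_apply d hc q y, map_zero]
  have hD : Delta d (q + 1) (d q y)
      = d q (LinearMap.adjoint (d q) (d q y))
        + LinearMap.adjoint (d (q + 1)) (d (q + 1) (d q y)) := rfl
  rw [hD, h0, add_zero]

lemma Nspace_eq_zero (q : ℕ) {x : V q} (hx : x ∈ Nspace d lam q) (h : d q x = 0) :
    x = 0 := by
  have h0 : Delta d q x = 0 := by
    rw [Delta_eq_B d hc q hx.2, h, map_zero]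
  exact smallSpace_ker d lam q hx.1 h0

lemma Zspace_invariant (q : ℕ) {z : V (q + 1)}
    (hH : ∀ x ∈ smallSpace d lam (q + 1), Delta d (q + 1) x ∈ smallSpace d lam (q + 1))
    (hz : z ∈ Zspace d lam q) : Delta d (q + 1) z ∈ Zspace d lam q := by
  refine ⟨hH _ hz.1, ?_⟩
  rw [Delta_eq_A d hc q hz.2]
  exact ⟨_, rfl⟩

lemma N_disjoint_Z (q : ℕ) : Nspace d lam (q + 1) ⊓ Zspace d lam q = ⊥ := by
  rw [eq_bot_iff]
  rintro x ⟨⟨-, hx1⟩, -, hx2⟩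
  obtain ⟨y, hy⟩ := hx1
  obtain ⟨u, hu⟩ := hx2
  have hxx : (inner ℂ x x : ℂ) = 0 := by
    calc (inner ℂ x x : ℂ) = inner ℂ (d q u) (LinearMap.adjoint (d (q + 1)) y) := by rw [hu, hy]
      _ = inner ℂ (d (q + 1) (d q u)) y := LinearMap.adjoint_inner_right _ _ _
      _ = 0 := by rw [dd_apply d hc q u, inner_zero_left]
  simpa using inner_self_eq_zero.mp hxx

lemma N_sup_Z (q : ℕ) : Nspace d lam (q + 1) ⊔ Zspace d lam q = smallSpace d lam (q + 1) := by
  apply le_antisymm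
  · exact sup_le inf_le_left inf_le_left
  · refine iSup₂_le fun μ hμ => fun x hx => ?_
    have hx' : Delta d (q + 1) x = (μ : ℂ) • x := Module.End.mem_eigenspace_iff.mp hx
    set A := d q (LinearMap.adjoint (d q) x) with hA
    set B := LinearMap.adjoint (d (q + 1)) (d (q + 1) x) with hB
    have hAB : A + B = (μ : ℂ) • x := by
      rw [hA, hB, ← hx']; rfl
    have hμ0 : (μ : ℂ) ≠ 0 := by exact_mod_cast ne_of_gt hμ.1
    have hAeig : Delta d (q + 1) A = (μ : ℂ) • A := by
      rw [hA, Delta_d_apply d hc q _, Delta_adj_apply d hc q x, hx', map_smul, map_smul]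
    have hBeig : Delta d (q + 1) B = (μ : ℂ) • B := by
      rw [hB, Delta_adj_apply d hc (q + 1) _, Delta_d_apply d hc (q + 1) x, hx',
        map_smul, map_smul]
    have hAmem : A ∈ Zspace d lam q :=
      ⟨mem_smallSpace_of_eigen d lam hμ hAeig, ⟨_, rfl⟩⟩
    have hBmem : B ∈ Nspace d lam (q + 1) :=
      ⟨mem_smallSpace_of_eigen d lam hμ hBeig, ⟨_, rfl⟩⟩
    refine Submodule.mem_sup.mpr ⟨(μ : ℂ)⁻¹ • B, Submodule.smul_mem _ _ hBmem,
      (μ : ℂ)⁻¹ • A, Submodule.smul_mem _ _ hAmem, ?_⟩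
    rw [← smul_add, add_comm B A, hAB, inv_smul_smul₀ hμ0]

lemma Z_le_map (q : ℕ)
    (hH : ∀ x ∈ smallSpace d lam (q + 1), Delta d (q + 1) x ∈ smallSpace d lam (q + 1)) :
    Zspace d lam q ≤ Submodule.map (d q) (Nspace d lam q) := by
  intro z hz
  set T := (Delta d (q + 1)).restrict
    (fun x hx => Zspace_invariant d hc lam q hH hx) with hT
  have hinj : Function.Injective T := by
    rw [injective_iff_map_eq_zero]
    intro a ha
    have ha' : Delta d (q + 1) (a : V (q + 1)) = 0 := by
      have := congrArg Subtype.val ha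
      rwa [LinearMap.restrict_coe_apply] at this
    exact Subtype.ext (smallSpace_ker d lam (q + 1) a.2.1 ha')
  have hsurj := LinearMap.injective_iff_surjective.mp hinj
  obtain ⟨w, hw⟩ := hsurj ⟨z, hz⟩
  have hw' : Delta d (q + 1) (w : V (q + 1)) = z := by
    have := congrArg Subtype.val hw
    rwa [LinearMap.restrict_coe_apply] at this
  have hwz : (w : V (q + 1)) ∈ Zspace d lam q := w.2
  refine ⟨LinearMap.adjoint (d q) (w : V (q + 1)),
    ⟨adj_mem_smallSpace d hc lam q hwz.1, ⟨_, rfl⟩⟩, ?_⟩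
  rw [← Delta_eq_A d hc q hwz.2, hw']

end Aux


/-- In a finite cochain complex of finite-dimensional complex inner product
spaces, fix `λ > 0`, let `H_q(λ)` be the span of the eigenvectors of `Δ_q` with eigenvalue in
`(0, λ)` and `N_q(λ) := H_q(λ) ∩ range d_q*` (these subspaces are `Δ_q`-invariant). Then the
following identity of positive real numbers holds:
`∏_{q=1}^{n} det (Δ_q|_{H_q(λ)})^{(−1)^{q+1} q} = ∏_{q=0}^{n−1} det (Δ_q|_{N_q(λ)})^{(−1)^q}`,
the exponents being integers. -/
theorem stmt9 {V : ℕ → Type*} [∀ q, NormedAddCommGroup (V q)]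
    [∀ q, InnerProductSpace ℂ (V q)] [∀ q, FiniteDimensional ℂ (V q)]
    (n : ℕ) (d : ∀ q, V q →ₗ[ℂ] V (q + 1))
    (hcomplex : ∀ q, d (q + 1) ∘ₗ d q = 0)
    (hfin : ∀ q, n ≤ q → d q = 0)
    (lam : ℝ) (hlam : 0 < lam)
    (hH : ∀ q, ∀ x ∈ smallSpace d lam q, Delta d q x ∈ smallSpace d lam q)
    (hN : ∀ q, ∀ x ∈ Nspace d lam q, Delta d q x ∈ Nspace d lam q) :
    ∃ r : ℝ, 0 < r ∧
      (∏ q ∈ Finset.Icc 1 n,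
        LinearMap.det ((Delta d q).restrict (hH q)) ^ ((-1 : ℤ) ^ (q + 1) * q) = (r : ℂ)) ∧
      (∏ q ∈ Finset.range n,
        LinearMap.det ((Delta d q).restrict (hN q)) ^ ((-1 : ℤ) ^ q) = (r : ℂ)) := by

  classical
  set a : ℕ → ℂ := fun q => LinearMap.det ((Delta d q).restrict (hN q)) with ha_def
  have haq : ∀ q, a q = LinearMap.det ((Delta d q).restrict (hN q)) := fun _ => rfl
  -- each `a q` is a positive real
  have hex : ∀ q, ∃ r : ℝ, 0 < r ∧ a q = (r : ℂ) := by
    intro q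
    apply det_isPosReal_of_symmetric
    · intro x y
      show (inner ℂ (((Delta d q).restrict (hN q)) x) y : ℂ)
        = inner ℂ x (((Delta d q).restrict (hN q)) y)
      rw [Submodule.coe_inner, Submodule.coe_inner, LinearMap.restrict_coe_apply,
        LinearMap.restrict_coe_apply]
      exact Delta_isSymmetric d q _ _
    · intro x
      have h : (inner ℂ x (((Delta d q).restrict (hN q)) x) : ℂ)
          = inner ℂ (x : V q) (Delta d q (x : V q)) := by
        rw [Submodule.coe_inner, LinearMap.restrict_coe_apply]
      rw [h]
      exact Delta_inner_nonneg d q _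
    · intro x hx
      have hx' : Delta d q (x : V q) = 0 := by
        have := congrArg Subtype.val hx
        rwa [LinearMap.restrict_coe_apply] at this
      exact Subtype.ext (smallSpace_ker d lam q x.2.1 hx')
  choose r hrpos hra using hex
  have hane : ∀ q, a q ≠ 0 := fun q => by
    rw [hra q]
    exact_mod_cast (hrpos q).ne'
  -- `N_n = 0`, hence `a n = 1`
  have hNn0 : ∀ x : V n, x ∈ Nspace d lam n → x = 0 := by
    intro x hx
    obtain ⟨y, hy⟩ := hx.2
    have hxx : (inner ℂ x x : ℂ) = 0 := by
      calc (inner ℂ x x : ℂ) = inner ℂ (LinearMap.adjoint (d n) y) x := by rw [hy]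
        _ = inner ℂ y (d n x) := LinearMap.adjoint_inner_left _ _ _
        _ = 0 := by rw [hfin n le_rfl]; simp
    exact inner_self_eq_zero.mp hxx
  haveI hsub : Subsingleton ↥(Nspace d lam n) :=
    ⟨fun x y => Subtype.ext (by rw [hNn0 _ x.2, hNn0 _ y.2])⟩
  have han : a n = 1 := LinearMap.det_eq_one_of_subsingleton _
  -- splitting of the determinant on `H_{m+1}`
  have hsplit : ∀ m : ℕ, LinearMap.det ((Delta d (m + 1)).restrict (hH (m + 1)))
      = a (m + 1) * a m := by
    intro m
    have hZinv : ∀ x ∈ Zspace d lam m, Delta d (m + 1) x ∈ Zspace d lam m :=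
      fun x hx => Zspace_invariant d hcomplex lam m (hH (m + 1)) hx
    rw [det_restrict_sup' (N_disjoint_Z d hcomplex lam m) (N_sup_Z d hcomplex lam m)
      (hN (m + 1)) hZinv (hH (m + 1))]
    rw [haq (m + 1)]
    congr 1
    -- `det` on `Z_m` equals `a m`, via the isomorphism `d_m : N_m ≃ Z_m`
    have hmap : ∀ x ∈ Nspace d lam m, d m x ∈ Zspace d lam m :=
      fun x hx => ⟨d_mem_smallSpace d hcomplex lam m hx.1, ⟨x, rfl⟩⟩
    set S := (d m).restrict hmap with hS
    have hSinj : Function.Injective S := by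
      rw [injective_iff_map_eq_zero]
      intro x hx0
      have hdx : d m (x : V m) = 0 := by
        have := congrArg Subtype.val hx0
        rwa [LinearMap.restrict_coe_apply] at this
      exact Subtype.ext (Nspace_eq_zero d hcomplex lam m x.2 hdx)
    have hSsurj : Function.Surjective S := by
      rintro ⟨z, hz⟩
      obtain ⟨x, hx, hxz⟩ := Z_le_map d hcomplex lam m (hH (m + 1)) hz
      exact ⟨⟨x, hx⟩, Subtype.ext hxz⟩
    set e := LinearEquiv.ofBijective S ⟨hSinj, hSsurj⟩ with he
    have hcoe : ∀ y : ↥(Nspace d lam m), ((e y : ↥(Zspace d lam m)) : V (m + 1))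
        = d m (y : V m) := fun y => rfl
    have hcomm : ((Delta d (m + 1)).restrict hZinv) ∘ₗ (e : _ →ₗ[ℂ] _)
        = (e : _ →ₗ[ℂ] _) ∘ₗ ((Delta d m).restrict (hN m)) := by
      apply LinearMap.ext
      intro x
      apply Subtype.ext
      simp only [LinearMap.comp_apply, LinearEquiv.coe_coe]
      rw [LinearMap.restrict_coe_apply, hcoe x, hcoe _, LinearMap.restrict_coe_apply]
      exact Delta_d_apply d hcomplex m (x : V m)
    have heq : (Delta d (m + 1)).restrict hZinv
        = (e : _ →ₗ[ℂ] _) ∘ₗ ((Delta d m).restrict (hN m)) ∘ₗ (e.symm : _ →ₗ[ℂ] _) := by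
      apply LinearMap.ext
      intro z
      conv_lhs => rw [← e.apply_symm_apply z]
      have := LinearMap.ext_iff.mp hcomm (e.symm z)
      simpa using this
    rw [heq, LinearMap.det_conj, haq m]
  -- assemble
  refine ⟨∏ q ∈ Finset.range n, r q ^ ((-1 : ℤ) ^ q),
    Finset.prod_pos (fun q _ => zpow_pos (hrpos q) _), ?_, ?_⟩
  · have hprod1 : ∏ q ∈ Finset.Icc 1 n,
        LinearMap.det ((Delta d q).restrict (hH q)) ^ ((-1 : ℤ) ^ (q + 1) * q)
        = ∏ q ∈ Finset.Icc 1 n, (a q * a (q - 1)) ^ ((-1 : ℤ) ^ (q + 1) * q) := by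
      refine Finset.prod_congr rfl fun q hq => ?_
      have h1 : 1 ≤ q := (Finset.mem_Icc.mp hq).1
      obtain ⟨m, rfl⟩ : ∃ m, q = m + 1 := ⟨q - 1, by omega⟩
      rw [hsplit m]
      norm_num
    rw [hprod1, telescope_prod a hane n, han, one_zpow, one_mul]
    rw [Complex.ofReal_prod]
    refine Finset.prod_congr rfl fun q _ => ?_
    rw [hra q, ← Complex.ofReal_zpow]
  · have hprod2 : ∏ q ∈ Finset.range n,
        LinearMap.det ((Delta d q).restrict (hN q)) ^ ((-1 : ℤ) ^ q)
        = ∏ q ∈ Finset.range n, a q ^ ((-1 : ℤ) ^ q) :=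
      Finset.prod_congr rfl fun q _ => by rw [haq q]
    rw [hprod2, Complex.ofReal_prod]
    refine Finset.prod_congr rfl fun q _ => ?_
    rw [hra q, ← Complex.ofReal_zpow]
end

section
/- Let n ≥ 1, let μ₁, …, μ_n be positive reals, and let φ : ℂⁿ → ℝ be a continuous function such that for some constants C, r > 0 one has |φ(z) − Σ_{i=1}^n μ_i|z_i|²| ≤ C‖z‖³ whenever ‖z‖ ≤ r. Let χ : ℂⁿ → ℝ be a continuous, compactly supported function with 0 ≤ χ ≤ 1, χ ≡ 1 on a neighborhood of 0, and φ(z) > 0 for every z ≠ 0 in the support of χ. Then lim_{k→∞} kⁿ ∫_{ℂⁿ} χ(z) e^{−kφ(z)} dλ(z) = πⁿ / (μ₁ ⋯ μ_n), where λ is Lebesgue measure on ℂⁿ ≅ ℝ^{2n}. -/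
open MeasureTheory Filter

set_option maxHeartbeats 1000000

/-- The Euclidean norm on `ℂⁿ ≅ ℝ^{2n}`. -/
noncomputable def euclideanNormC {n : ℕ} (z : Fin n → ℂ) : ℝ :=
  Real.sqrt (∑ i, ‖z i‖ ^ 2)

section aux

open Real

lemma euclideanNormC_nonneg {n : ℕ} (z : Fin n → ℂ) : 0 ≤ euclideanNormC z :=
  Real.sqrt_nonneg _

lemma sq_euclideanNormC {n : ℕ} (z : Fin n → ℂ) :
    euclideanNormC z ^ 2 = ∑ i, ‖z i‖ ^ 2 :=
  Real.sq_sqrt (Finset.sum_nonneg fun i _ => by positivity)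

lemma euclideanNormC_smul {n : ℕ} (t : ℝ) (ht : 0 ≤ t) (z : Fin n → ℂ) :
    euclideanNormC (t • z) = t * euclideanNormC z := by
  unfold euclideanNormC
  have : ∀ i : Fin n, ‖(t • z) i‖ ^ 2 = t ^ 2 * ‖z i‖ ^ 2 := by
    intro i
    have : (t • z) i = t • z i := rfl
    rw [this, norm_smul]
    simp [Real.norm_eq_abs, abs_of_nonneg ht, mul_pow]
  simp_rw [this, ← Finset.mul_sum]
  rw [Real.sqrt_mul (by positivity), Real.sqrt_sq ht]

lemma euclideanNormC_continuous {n : ℕ} : Continuous (euclideanNormC (n := n)) := by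
  apply Real.continuous_sqrt.comp
  exact continuous_finset_sum _ fun i _ =>
    ((continuous_norm.comp (continuous_apply i)).pow 2)

lemma sqrtC_tendsto_atTop : Filter.Tendsto Real.sqrt Filter.atTop Filter.atTop := by
  refine Filter.tendsto_atTop.mpr fun b => ?_
  filter_upwards [Filter.eventually_ge_atTop (max (b * b) 0)] with x hx
  rcases le_or_gt b 0 with hb | hb
  · exact hb.trans (Real.sqrt_nonneg x)
  · rw [show b = Real.sqrt (b * b) from (Real.sqrt_mul_self hb.le).symm]
    exact Real.sqrt_le_sqrt (le_trans (le_max_left _ _) hx)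

lemma integral_gauss_complex {b : ℝ} (hb : 0 < b) :
    ∫ z : ℂ, Real.exp (-(b * ‖z‖ ^ 2)) = π / b := by
  have h := GaussianFourier.integral_rexp_neg_mul_sq_norm (V := ℂ) hb
  simp only [Complex.finrank_real_complex, neg_mul] at h
  rw [show ((2:ℕ) / 2 : ℝ) = 1 by norm_num, Real.rpow_one] at h
  exact h

lemma integrable_gauss_complex {b : ℝ} (hb : 0 < b) :
    Integrable (fun z : ℂ => Real.exp (-(b * ‖z‖ ^ 2))) := by
  have h := (GaussianFourier.integrable_cexp_neg_mul_sq_norm_add (V := ℂ) (b := (b:ℂ))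
    (by simpa using hb) 0 0).norm
  apply h.congr
  filter_upwards with z
  simp [Complex.norm_exp, ← Complex.ofReal_pow]

lemma integrable_gauss_pi {n : ℕ} {c : ℝ} (hc : 0 < c) :
    Integrable (fun w : Fin n → ℂ => Real.exp (-(c * euclideanNormC w ^ 2))) := by
  have : ∀ w : Fin n → ℂ, Real.exp (-(c * euclideanNormC w ^ 2))
      = ∏ i, Real.exp (-(c * ‖w i‖ ^ 2)) := by
    intro w
    rw [sq_euclideanNormC, Finset.mul_sum, ← Finset.sum_neg_distrib, Real.exp_sum]
  simp_rw [this]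
  exact Integrable.fintype_prod
    (f := fun (i : Fin n) (z : ℂ) => Real.exp (-(c * ‖z‖ ^ 2)))
    (fun i => integrable_gauss_complex hc)

lemma integral_gauss_pi {n : ℕ} {μ : Fin n → ℝ} (hμ : ∀ i, 0 < μ i) :
    ∫ w : Fin n → ℂ, Real.exp (-(∑ i, μ i * ‖w i‖ ^ 2))
      = π ^ n / ∏ i, μ i := by
  have h1 : ∀ w : Fin n → ℂ, Real.exp (-(∑ i, μ i * ‖w i‖ ^ 2))
      = ∏ i, Real.exp (-(μ i * ‖w i‖ ^ 2)) := by
    intro w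
    rw [← Real.exp_sum, ← Finset.sum_neg_distrib]
  simp_rw [h1]
  rw [MeasureTheory.integral_fintype_prod_volume_eq_prod
    (f := fun (i : Fin n) (z : ℂ) => Real.exp (-(μ i * ‖z‖ ^ 2)))]
  have h2 : ∀ i : Fin n, (∫ z : ℂ, Real.exp (-(μ i * ‖z‖ ^ 2))) = π / μ i :=
    fun i => integral_gauss_complex (hμ i)
  simp_rw [h2]
  rw [Finset.prod_div_distrib, Finset.prod_const, Finset.card_univ, Fintype.card_fin]

end aux

/-- (Localized Gaussian/Laplace asymptotics.) Let `n ≥ 1`, `μ₁, …, μ_n > 0`,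
and `φ : ℂⁿ → ℝ` continuous with `|φ(z) − Σ μ_i |z_i|²| ≤ C ‖z‖³` for `‖z‖ ≤ r` (some
`C, r > 0`). Let `χ : ℂⁿ → ℝ` be continuous with compact support, `0 ≤ χ ≤ 1`, `χ ≡ 1` near `0`,
and `φ(z) > 0` for every `z ≠ 0` in the support of `χ`. Then
`kⁿ ∫ χ e^{−kφ} dλ → πⁿ / (μ₁ ⋯ μ_n)` as `k → ∞`, `λ` being Lebesgue measure on `ℂⁿ`. -/
theorem stmt11 (n : ℕ) (hn : 1 ≤ n) (μ : Fin n → ℝ) (hμ : ∀ i, 0 < μ i)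
    (φ : (Fin n → ℂ) → ℝ) (hφ : Continuous φ)
    (C r : ℝ) (hC : 0 < C) (hr : 0 < r)
    (happrox : ∀ z : Fin n → ℂ, euclideanNormC z ≤ r →
      |φ z - ∑ i, μ i * ‖z i‖ ^ 2| ≤ C * euclideanNormC z ^ 3)
    (χ : (Fin n → ℂ) → ℝ) (hχc : Continuous χ)
    (hχsupp : HasCompactSupport χ) (hχ01 : ∀ z, χ z ∈ Set.Icc (0 : ℝ) 1)
    (hχ1 : ∀ᶠ z in nhds (0 : Fin n → ℂ), χ z = 1)
    (hφpos : ∀ z ∈ tsupport χ, z ≠ 0 → 0 < φ z) :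
    Tendsto (fun k : ℕ => (k : ℝ) ^ n * ∫ z : Fin n → ℂ,
        χ z * Real.exp (-(k * φ z)))
      atTop (nhds (Real.pi ^ n / ∏ i, μ i)) := by
  haveI : Nonempty (Fin n) := Fin.pos_iff_nonempty.mp hn
  set E : (Fin n → ℂ) → ℝ := euclideanNormC with hEdef
  set Q : (Fin n → ℂ) → ℝ := fun z => ∑ i, μ i * ‖z i‖ ^ 2 with hQdef
  have hEnn : ∀ z, 0 ≤ E z := euclideanNormC_nonneg
  have hEsq : ∀ z : Fin n → ℂ, E z ^ 2 = ∑ i, ‖z i‖ ^ 2 := sq_euclideanNormC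
  have hEcont : Continuous E := euclideanNormC_continuous
  have hE0 : E 0 = 0 := by simp [hEdef, euclideanNormC]
  -- lower bound for Q
  set m : ℝ := Finset.univ.inf' Finset.univ_nonempty μ with hmdef
  have hmle : ∀ i, m ≤ μ i := fun i => Finset.inf'_le _ (Finset.mem_univ i)
  have hm : 0 < m := by
    obtain ⟨i₀, _, hi₀⟩ := Finset.exists_mem_eq_inf' Finset.univ_nonempty μ
    rw [hmdef, hi₀]; exact hμ i₀
  have hQlb : ∀ z, m * E z ^ 2 ≤ Q z := by
    intro z
    rw [hEsq, Finset.mul_sum]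
    exact Finset.sum_le_sum fun i _ =>
      mul_le_mul_of_nonneg_right (hmle i) (by positivity)
  -- choice of ρ
  set ρ : ℝ := min r (m / (2 * C)) with hρdef
  have hρpos : 0 < ρ := lt_min hr (by positivity)
  have hρr : ρ ≤ r := min_le_left _ _
  have hCρ : C * ρ ≤ m / 2 := by
    have : ρ ≤ m / (2 * C) := min_le_right _ _
    calc C * ρ ≤ C * (m / (2 * C)) := by nlinarith
    _ = m / 2 := by field_simp
  -- 0 is in the support
  have hχ0 : χ 0 = 1 := hχ1.self_of_nhds
  have h0supp : (0 : Fin n → ℂ) ∈ tsupport χ :=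
    subset_tsupport χ (by simp [Function.mem_support, hχ0])
  -- bound R on the support
  obtain ⟨z₀, hz₀, hz₀max⟩ := hχsupp.exists_isMaxOn ⟨0, h0supp⟩ hEcont.continuousOn
  set R : ℝ := max (E z₀) 1 with hRdef
  have hRpos : 0 < R := lt_of_lt_of_le one_pos (le_max_right _ _)
  have hRbound : ∀ z ∈ tsupport χ, E z ≤ R :=
    fun z hz => le_trans (hz₀max hz) (le_max_left _ _)
  -- ε on the annulus
  set K : Set (Fin n → ℂ) := tsupport χ ∩ {z | ρ ≤ E z} with hKdef
  have hKc : IsCompact K := hχsupp.inter_right (isClosed_le continuous_const hEcont)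
  obtain ⟨ε, hεpos, hεK⟩ : ∃ ε : ℝ, 0 < ε ∧ ∀ z ∈ K, ε ≤ φ z := by
    rcases K.eq_empty_or_nonempty with h | h
    · exact ⟨1, one_pos, by simp [h]⟩
    · obtain ⟨x, hxK, hxmin⟩ := hKc.exists_isMinOn h hφ.continuousOn
      refine ⟨φ x, ?_, fun z hz => hxmin hz⟩
      apply hφpos x hxK.1
      intro h0
      have := hxK.2
      rw [h0] at this
      simp only [Set.mem_setOf_eq, hE0] at this
      linarith
  set c : ℝ := min (m / 2) (ε / R ^ 2) with hcdef
  have hc : 0 < c := lt_min (by positivity) (by positivity)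
  -- scaling factor
  set s : ℕ → ℝ := fun k => (Real.sqrt k)⁻¹ with hsdef
  have hs_nonneg : ∀ k, 0 ≤ s k := fun k => inv_nonneg.mpr (Real.sqrt_nonneg _)
  have hsq : ∀ k : ℕ, 1 ≤ k → Real.sqrt k ^ 2 = (k : ℝ) :=
    fun k hk => Real.sq_sqrt (by positivity)
  have hsqrtpos : ∀ k : ℕ, 1 ≤ k → 0 < Real.sqrt k := by
    intro k hk
    apply Real.sqrt_pos.mpr
    exact_mod_cast Nat.lt_of_lt_of_le Nat.zero_lt_one hk
  -- the rescaled family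
  set F : ℕ → (Fin n → ℂ) → ℝ :=
    fun k w => χ (s k • w) * Real.exp (-((k : ℝ) * φ (s k • w))) with hFdef
  -- Step A : change of variables
  have keyA : ∀ k : ℕ, 1 ≤ k →
      (∫ w, F k w) = (k : ℝ) ^ n * ∫ z : Fin n → ℂ, χ z * Real.exp (-((k : ℝ) * φ z)) := by
    intro k hk
    have hrank : Module.finrank ℝ (Fin n → ℂ) = 2 * n := by
      simp [Module.finrank_pi_fintype, Complex.finrank_real_complex, mul_comm]
    have h := MeasureTheory.Measure.integral_comp_inv_smul_of_nonneg
      (volume : Measure (Fin n → ℂ))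
      (fun z => χ z * Real.exp (-((k : ℝ) * φ z))) (Real.sqrt_nonneg (k : ℝ))
    rw [hrank] at h
    have hpow : Real.sqrt k ^ (2 * n) = (k : ℝ) ^ n := by
      rw [pow_mul, hsq k hk]
    rw [hFdef]
    simp only [hsdef]
    rw [h, hpow, smul_eq_mul]
  -- Step B : dominated convergence
  have keyB : Tendsto (fun k => ∫ w, F k w) atTop
      (nhds (Real.pi ^ n / ∏ i, μ i)) := by
    have hint : (∫ w : Fin n → ℂ, Real.exp (-(Q w))) = Real.pi ^ n / ∏ i, μ i :=
      integral_gauss_pi hμ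
    rw [← hint]
    apply tendsto_integral_filter_of_dominated_convergence
      (bound := fun w => Real.exp (-(c * E w ^ 2)))
    · -- measurability
      filter_upwards with k
      exact ((hχc.comp (continuous_const_smul _)).mul
        ((Real.continuous_exp.comp
          ((continuous_const.mul (hφ.comp (continuous_const_smul _))).neg)))).aestronglyMeasurable
    · -- bound
      filter_upwards [eventually_ge_atTop 1] with k hk
      filter_upwards with w
      set u : Fin n → ℂ := s k • w with hudef
      have hsk : 0 < Real.sqrt k := hsqrtpos k hk
      have hEu : E u = (Real.sqrt k)⁻¹ * E w := euclideanNormC_smul _ (hs_nonneg k) w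
      have hF_nonneg : 0 ≤ F k w :=
        mul_nonneg (hχ01 _).1 (Real.exp_pos _).le
      rw [Real.norm_eq_abs, abs_of_nonneg hF_nonneg]
      have hFle : F k w ≤ Real.exp (-((k : ℝ) * φ u)) := by
        rw [hFdef]
        exact mul_le_of_le_one_left (Real.exp_pos _).le (hχ01 _).2
      have hgoal : ∀ hkφ : c * E w ^ 2 ≤ (k : ℝ) * φ u,
          F k w ≤ Real.exp (-(c * E w ^ 2)) :=
        fun hkφ => le_trans hFle (Real.exp_le_exp.mpr (neg_le_neg hkφ))
      rcases le_or_gt (E w) (ρ * Real.sqrt k) with hcase | hcase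
      · -- inner region
        apply hgoal
        have hEuρ : E u ≤ ρ := by
          rw [hEu, inv_mul_le_iff₀ hsk, mul_comm]
          exact hcase
        have h1 := happrox u (le_trans hEuρ hρr)
        have h2 : Q u - C * E u ^ 3 ≤ φ u := by
          have := (abs_le.mp h1).2
          rw [hQdef]
          simp only at this ⊢
          linarith [(abs_le.mp h1).1]
        have h3 : m * E u ^ 2 ≤ Q u := hQlb u
        have hEu0 : 0 ≤ E u := hEnn u
        have h4a : C * E u ≤ m / 2 :=
          le_trans (mul_le_mul_of_nonneg_left hEuρ hC.le) hCρ
        have h4 : C * E u ^ 3 ≤ (m / 2) * E u ^ 2 := by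
          nlinarith [mul_le_mul_of_nonneg_right h4a (sq_nonneg (E u)), sq_nonneg (E u)]
        have h5 : (m / 2) * E u ^ 2 ≤ φ u := by linarith
        have h6 : (k : ℝ) * E u ^ 2 = E w ^ 2 := by
          rw [hEu, mul_pow, inv_pow, hsq k hk]
          field_simp
        have h7 : c * E w ^ 2 ≤ (m / 2) * E w ^ 2 :=
          mul_le_mul_of_nonneg_right (min_le_left _ _) (by positivity)
        have hkpos : (0 : ℝ) < k := by exact_mod_cast hk
        calc c * E w ^ 2 ≤ (m / 2) * E w ^ 2 := h7
          _ = (k : ℝ) * ((m / 2) * E u ^ 2) := by rw [← h6]; ring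
          _ ≤ (k : ℝ) * φ u := by nlinarith
      · -- outer region
        by_cases hu : u ∈ tsupport χ
        · apply hgoal
          have hEuρ : ρ ≤ E u := by
            have hid : ρ = (Real.sqrt k)⁻¹ * (ρ * Real.sqrt k) := by
              field_simp
            rw [hEu, hid]
            exact mul_le_mul_of_nonneg_left hcase.le (inv_nonneg.mpr hsk.le)
          have huK : u ∈ K := ⟨hu, hEuρ⟩
          have hφu : ε ≤ φ u := hεK u huK
          have hEuR : E u ≤ R := hRbound u hu
          have hEwR : E w ≤ R * Real.sqrt k := by
            rw [hEu, inv_mul_le_iff₀ hsk, mul_comm] at hEuR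
            linarith [hEuR]
          have h8 : E w ^ 2 ≤ R ^ 2 * k := by
            have := mul_self_le_mul_self (hEnn w) hEwR
            calc E w ^ 2 = E w * E w := sq (E w) ▸ (sq (E w)).symm ▸ by ring
              _ ≤ (R * Real.sqrt k) * (R * Real.sqrt k) := this
              _ = R ^ 2 * (Real.sqrt k) ^ 2 := by ring
              _ = R ^ 2 * k := by rw [hsq k hk]
          have h9 : c ≤ ε / R ^ 2 := min_le_right _ _
          have hkpos : (0 : ℝ) < k := by exact_mod_cast hk
          calc c * E w ^ 2 ≤ (ε / R ^ 2) * E w ^ 2 :=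
                mul_le_mul_of_nonneg_right h9 (by positivity)
            _ ≤ (ε / R ^ 2) * (R ^ 2 * k) := by
                apply mul_le_mul_of_nonneg_left h8 (by positivity)
            _ = ε * k := by field_simp
            _ ≤ (k : ℝ) * φ u := by nlinarith
        · have : χ u = 0 := image_eq_zero_of_notMem_tsupport hu
          rw [hFdef]
          simp only [← hudef, this, zero_mul]
          exact (Real.exp_pos _).le
    · -- integrability of the bound
      exact integrable_gauss_pi hc
    · -- pointwise convergence
      filter_upwards with w
      have hs0 : Tendsto s atTop (nhds 0) := by
        apply Filter.Tendsto.inv_tendsto_atTop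
        exact sqrtC_tendsto_atTop.comp tendsto_natCast_atTop_atTop
      have hsmul0 : Tendsto (fun k : ℕ => s k • w) atTop (nhds 0) := by
        have := hs0.smul_const w
        simpa using this
      have hχev : ∀ᶠ k in atTop, χ (s k • w) = 1 := hsmul0.eventually hχ1
      -- convergence of k * φ (s k • w)
      have hEev : ∀ᶠ k : ℕ in atTop, E w ≤ r * Real.sqrt k := by
        have h1 : Tendsto (fun k : ℕ => r * Real.sqrt k) atTop atTop :=
          (sqrtC_tendsto_atTop.comp tendsto_natCast_atTop_atTop).const_mul_atTop hr
        exact h1.eventually_ge_atTop (E w)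
      have hdiff : ∀ᶠ k : ℕ in atTop,
          |(k : ℝ) * φ (s k • w) - Q w| ≤ C * E w ^ 3 * s k := by
        filter_upwards [eventually_ge_atTop 1, hEev] with k hk hkE
        set u : Fin n → ℂ := s k • w with hudef
        have hsk : 0 < Real.sqrt k := hsqrtpos k hk
        have hkpos : (0 : ℝ) < k := by exact_mod_cast hk
        have hEu : E u = (Real.sqrt k)⁻¹ * E w := euclideanNormC_smul _ (hs_nonneg k) w
        have hEur : E u ≤ r := by
          rw [hEu, inv_mul_le_iff₀ hsk, mul_comm]
          exact hkE
        have h1 := happrox u hEur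
        have hQu : Q u = ((Real.sqrt k)⁻¹) ^ 2 * Q w := by
          rw [hQdef]
          simp only
          rw [Finset.mul_sum]
          apply Finset.sum_congr rfl
          intro i _
          have : u i = (Real.sqrt k)⁻¹ • w i := rfl
          rw [this, norm_smul, Real.norm_eq_abs,
            abs_of_nonneg (hs_nonneg k)]
          ring
        have hkQu : (k : ℝ) * Q u = Q w := by
          rw [hQu, inv_pow, hsq k hk]
          field_simp
        have key : (k : ℝ) * φ u - Q w = (k : ℝ) * (φ u - Q u) := by
          rw [mul_sub, hkQu]
        rw [key, abs_mul, abs_of_pos hkpos]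
        calc (k : ℝ) * |φ u - Q u| ≤ (k : ℝ) * (C * E u ^ 3) :=
              mul_le_mul_of_nonneg_left h1 hkpos.le
          _ = C * E w ^ 3 * s k := by
              rw [hEu, hsdef]
              simp only
              rw [mul_pow, inv_pow]
              have h3 : Real.sqrt k ^ 3 = Real.sqrt k ^ 2 * Real.sqrt k := by ring
              rw [h3, hsq k hk]
              field_simp
      have hrhs : Tendsto (fun k : ℕ => C * E w ^ 3 * s k) atTop (nhds 0) := by
        have := hs0.const_mul (C * E w ^ 3)
        simpa using this
      have hφlim : Tendsto (fun k : ℕ => (k : ℝ) * φ (s k • w)) atTop (nhds (Q w)) := by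
        have hz : Tendsto (fun k : ℕ => (k : ℝ) * φ (s k • w) - Q w) atTop (nhds 0) := by
          apply squeeze_zero_norm' _ hrhs
          filter_upwards [hdiff] with k hk
          rwa [Real.norm_eq_abs]
        have := hz.add_const (Q w)
        simpa using this
      have hexp : Tendsto (fun k : ℕ => Real.exp (-((k : ℝ) * φ (s k • w)))) atTop
          (nhds (Real.exp (-(Q w)))) :=
        (Real.continuous_exp.tendsto _).comp hφlim.neg
      apply hexp.congr'
      filter_upwards [hχev] with k hk
      rw [hFdef]
      simp only [hk, one_mul]
  -- conclude
  apply keyB.congr'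
  filter_upwards [eventually_ge_atTop 1] with k hk
  exact keyA k hk
end
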